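/- If y is continuous on [0,T] and I_τ y is its piecewise linear interpolant on the uniform grid t_j = jτ, then the Caputo derivative of I_τ y at t_n = nτ equals the L1 formula: D^α(I_τ y)(t_n) = (τ^{-α}/Γ(2-α))·(y(t_n) − b_{n-1}·y(0) − ∑_{i=1}^{n-1}(b_{n-i-1} − b_{n-i})·y(t_i)), where b_i = (i+1)^{1-α} − i^{1-α}. -/

import Mathlib

open Real Set MeasureTheory intervalIntegral


/-- The piecewise linear interpolant of `y` on the uniform grid `t_j = j τ`. -/
noncomputable def linInterp (τ : ℝ) (y : ℝ → ℝ) (t : ℝ) : ℝ :=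
  (t - (⌊t / τ⌋ : ℝ) * τ) / τ * y (((⌊t / τ⌋ : ℝ) + 1) * τ)
    + (((⌊t / τ⌋ : ℝ) + 1) * τ - t) / τ * y ((⌊t / τ⌋ : ℝ) * τ)

/-- The Caputo derivative of order `α` (in the non-local difference form). -/
noncomputable def caputo (α : ℝ) (y : ℝ → ℝ) (t : ℝ) : ℝ :=
  (1 / Real.Gamma (1 - α)) * (y t - y 0) / t ^ α
    + (α / Real.Gamma (1 - α)) * ∫ s in (0:ℝ)..t, (y t - y s) / (t - s) ^ (1 + α)



lemma my_floor_eq {τ : ℝ} (hτ : 0 < τ) (j : ℕ) {s : ℝ}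
    (h1 : (j:ℝ) * τ ≤ s) (h2 : s < ((j:ℝ)+1) * τ) : ⌊s / τ⌋ = (j:ℤ) := by
  rw [Int.floor_eq_iff]
  constructor
  · push_cast
    rw [le_div_iff₀ hτ]
    linarith
  · push_cast
    rw [div_lt_iff₀ hτ]
    linarith

lemma linInterp_grid {τ : ℝ} (hτ : 0 < τ) (y : ℝ → ℝ) (k : ℕ) :
    linInterp τ y ((k:ℝ) * τ) = y ((k:ℝ) * τ) := by
  unfold linInterp
  have h : (k:ℝ) * τ / τ = (k:ℝ) := mul_div_cancel_right₀ _ hτ.ne'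
  rw [h, Int.floor_natCast]
  push_cast
  field_simp
  ring

lemma linInterp_eqOn {τ : ℝ} (hτ : 0 < τ) (y : ℝ → ℝ) (j : ℕ) {s : ℝ}
    (hs : s ∈ Icc ((j:ℝ)*τ) (((j:ℝ)+1)*τ)) :
    linInterp τ y s
      = (s - (j:ℝ)*τ)/τ * y (((j:ℝ)+1)*τ) + (((j:ℝ)+1)*τ - s)/τ * y ((j:ℝ)*τ) := by
  rcases lt_or_eq_of_le hs.2 with h | h
  · unfold linInterp
    rw [my_floor_eq hτ j hs.1 h]
    push_cast
    ring_nf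
  · have hk : (((j:ℕ)+1 : ℕ):ℝ) = (j:ℝ)+1 := by push_cast; ring
    rw [h]
    have := linInterp_grid hτ y (j+1)
    rw [hk] at this
    rw [this]
    field_simp
    ring


section
variable {α τ : ℝ}

-- F u = (A + Q u)/u^(1+α); we show EqOn with A u^(-(1+α)) + Q u^(-α) on Icc c d, c ≥ 0,
-- assuming (c = 0 → A = 0)
lemma F_eqOn (hα0 : 0 < α) (hα1 : α < 1) {A Q c d : ℝ} (hc : 0 ≤ c)
    (hA : c = 0 → A = 0) :
    EqOn (fun u => (A + Q * u) / u ^ ((1:ℝ)+α))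
      (fun u => A * u ^ (-(1+α)) + Q * u ^ (-α)) (Icc c d) := by
  intro u hu
  rcases eq_or_lt_of_le (hc.trans hu.1) with h0 | h0
  · have hc0 : c = 0 := le_antisymm (h0 ▸ hu.1) hc
    have hA0 := hA hc0
    simp only [← h0, hA0]
    rw [Real.zero_rpow (by positivity : (1:ℝ)+α ≠ 0),
        Real.zero_rpow (by intro h; rw [neg_eq_zero] at h; linarith : -(1+α) ≠ (0:ℝ)),
        Real.zero_rpow (by intro h; rw [neg_eq_zero] at h; linarith : -α ≠ (0:ℝ))]
    simp
  · have h1 : u ^ ((1:ℝ)+α) ≠ 0 := (Real.rpow_pos_of_pos h0 _).ne'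
    have hαne : u ^ α ≠ 0 := (Real.rpow_pos_of_pos h0 _).ne'
    have key : u ^ ((1:ℝ)+α) = u * u ^ α := by
      rw [Real.rpow_add h0, Real.rpow_one]
    simp only []
    rw [Real.rpow_neg h0.le, Real.rpow_neg h0.le]
    field_simp
    rw [key]
    ring

end

section
variable {α τ : ℝ}

lemma G_intble (hα0 : 0 < α) (hα1 : α < 1) {A Q c d : ℝ} (hc : 0 ≤ c) (hcd : c < d)
    (hA : c = 0 → A = 0) :
    IntervalIntegrable (fun u => A * u ^ (-(1+α)) + Q * u ^ (-α)) volume c d := by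
  apply IntervalIntegrable.add
  · by_cases hc0 : c = 0
    · simp only [hA hc0, zero_mul]
      exact intervalIntegrable_const
    · have hcpos : 0 < c := hc.lt_of_ne (Ne.symm hc0)
      have h0 : (0:ℝ) ∉ uIcc c d := by
        rw [uIcc_of_le hcd.le]
        intro h
        exact absurd h.1 (not_le.mpr hcpos)
      exact (intervalIntegral.intervalIntegrable_rpow (Or.inr h0)).const_mul A
  · exact (intervalIntegral.intervalIntegrable_rpow' (by linarith)).const_mul Q

lemma G_integral (hα0 : 0 < α) (hα1 : α < 1) {A Q c d : ℝ} (hc : 0 ≤ c) (hcd : c < d)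
    (hA : c = 0 → A = 0) :
    ∫ u in c..d, (A * u ^ (-(1+α)) + Q * u ^ (-α))
      = A * ((c ^ (-α) - d ^ (-α)) / α) + Q * ((d ^ (1-α) - c ^ (1-α)) / (1-α)) := by
  have hQ : IntervalIntegrable (fun u => Q * u ^ (-α)) volume c d :=
    (intervalIntegral.intervalIntegrable_rpow' (by linarith)).const_mul Q
  have hAble : IntervalIntegrable (fun u => A * u ^ (-(1+α))) volume c d := by
    by_cases hc0 : c = 0
    · simp only [hA hc0, zero_mul]; exact intervalIntegrable_const
    · have hcpos : 0 < c := hc.lt_of_ne (Ne.symm hc0)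
      have h0 : (0:ℝ) ∉ uIcc c d := by
        rw [uIcc_of_le hcd.le]; intro h; exact absurd h.1 (not_le.mpr hcpos)
      exact (intervalIntegral.intervalIntegrable_rpow (Or.inr h0)).const_mul A
  rw [intervalIntegral.integral_add hAble hQ, intervalIntegral.integral_const_mul,
      intervalIntegral.integral_const_mul]
  congr 1
  · -- A * ∫ u^(-(1+α)) = A * ((c^(-α) - d^(-α))/α)
    by_cases hc0 : c = 0
    · rw [hA hc0, zero_mul, zero_mul]
    · have hcpos : 0 < c := hc.lt_of_ne (Ne.symm hc0)
      have h0 : (0:ℝ) ∉ uIcc c d := by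
        rw [uIcc_of_le hcd.le]; intro h; exact absurd h.1 (not_le.mpr hcpos)
      rw [integral_rpow (Or.inr ⟨by intro h; nlinarith [h], h0⟩),
          show -(1+α)+1 = -α by ring]
      ring
  · rw [integral_rpow (Or.inl (by linarith)), show -α+1 = 1-α by ring]

end

lemma piece {α τ : ℝ} (hα0 : 0 < α) (hα1 : α < 1) (hτ : 0 < τ) (y : ℝ → ℝ)
    {n j : ℕ} (hj : j < n) :
    IntervalIntegrable
        (fun s => (y ((n:ℝ)*τ) - linInterp τ y s) / ((n:ℝ)*τ - s) ^ ((1:ℝ)+α))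
        volume ((j:ℝ)*τ) (((j:ℝ)+1)*τ)
      ∧
      ∫ s in ((j:ℝ)*τ)..(((j:ℝ)+1)*τ),
          (y ((n:ℝ)*τ) - linInterp τ y s) / ((n:ℝ)*τ - s) ^ ((1:ℝ)+α)
        = (y ((n:ℝ)*τ) - ((n:ℝ)-(j:ℝ)) * y (((j:ℝ)+1)*τ) + ((n:ℝ)-(j:ℝ)-1) * y ((j:ℝ)*τ))
            * (((((n:ℝ)-(j:ℝ)-1)*τ) ^ (-α) - (((n:ℝ)-(j:ℝ))*τ) ^ (-α)) / α)
          + (y (((j:ℝ)+1)*τ) - y ((j:ℝ)*τ)) / τ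
            * (((((n:ℝ)-(j:ℝ))*τ) ^ (1-α) - (((n:ℝ)-(j:ℝ)-1)*τ) ^ (1-α)) / (1-α)) := by
  have hjn : (j:ℝ) + 1 ≤ (n:ℝ) := by exact_mod_cast hj
  set t : ℝ := (n:ℝ)*τ with ht
  set A : ℝ := y ((n:ℝ)*τ) - ((n:ℝ)-(j:ℝ)) * y (((j:ℝ)+1)*τ) + ((n:ℝ)-(j:ℝ)-1) * y ((j:ℝ)*τ)
    with hAdef
  set Q : ℝ := (y (((j:ℝ)+1)*τ) - y ((j:ℝ)*τ)) / τ with hQdef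
  set c : ℝ := ((n:ℝ)-(j:ℝ)-1)*τ with hcdef
  set d : ℝ := ((n:ℝ)-(j:ℝ))*τ with hddef
  have hc : 0 ≤ c := mul_nonneg (by linarith) hτ.le
  have hcd : c < d := by rw [hcdef, hddef]; nlinarith
  have hA : c = 0 → A = 0 := by
    intro h
    have h1 : (n:ℝ) - (j:ℝ) - 1 = 0 := by
      rcases mul_eq_zero.mp h with h' | h'
      · exact h'
      · exact absurd h' hτ.ne'
    have h2 : (n:ℝ) = (j:ℝ) + 1 := by linarith
    rw [hAdef, h2]
    ring
  have hab : (j:ℝ)*τ ≤ ((j:ℝ)+1)*τ := by nlinarith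
  have e1 : t - c = ((j:ℝ)+1)*τ := by rw [ht, hcdef]; ring
  have e2 : t - d = (j:ℝ)*τ := by rw [ht, hddef]; ring
  -- the original integrand equals F ∘ (t - ·) on the interval
  have hEq : EqOn (fun s => (y ((n:ℝ)*τ) - linInterp τ y s) / ((n:ℝ)*τ - s) ^ ((1:ℝ)+α))
      (fun s => (A + Q * (t - s)) / (t - s) ^ ((1:ℝ)+α)) (Icc ((j:ℝ)*τ) (((j:ℝ)+1)*τ)) := by
    intro s hs
    simp only
    rw [linInterp_eqOn hτ y j hs]
    congr 1
    rw [ht, hAdef, hQdef]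
    field_simp
    ring
  have hFint : IntervalIntegrable (fun u => (A + Q * u) / u ^ ((1:ℝ)+α)) volume c d := by
    have hG := G_intble hα0 hα1 (Q := Q) hc hcd hA
    rw [intervalIntegrable_iff_integrableOn_Ioc_of_le hcd.le] at hG ⊢
    exact hG.congr_fun
      (fun u hu => ((F_eqOn hα0 hα1 hc hA) (Ioc_subset_Icc_self hu)).symm) measurableSet_Ioc
  have hcomp : IntervalIntegrable (fun s => (A + Q * (t - s)) / (t - s) ^ ((1:ℝ)+α))
      volume ((j:ℝ)*τ) (((j:ℝ)+1)*τ) := by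
    have h := (hFint.comp_sub_left t).symm
    rwa [e1, e2] at h
  constructor
  · rw [intervalIntegrable_iff_integrableOn_Ioc_of_le hab] at hcomp ⊢
    exact hcomp.congr_fun (fun s hs => (hEq (Ioc_subset_Icc_self hs)).symm) measurableSet_Ioc
  · have hEq' : EqOn (fun s => (y ((n:ℝ)*τ) - linInterp τ y s) / ((n:ℝ)*τ - s) ^ ((1:ℝ)+α))
        (fun s => (A + Q * (t - s)) / (t - s) ^ ((1:ℝ)+α)) (uIcc ((j:ℝ)*τ) (((j:ℝ)+1)*τ)) := by
      rw [uIcc_of_le hab]; exact hEq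
    rw [intervalIntegral.integral_congr hEq',
        intervalIntegral.integral_comp_sub_left (fun u => (A + Q * u) / u ^ ((1:ℝ)+α)) t,
        show t - (((j:ℝ)+1)*τ) = c from by rw [ht, hcdef]; ring,
        show t - ((j:ℝ)*τ) = d from by rw [ht, hddef]; ring]
    have hFeq' : EqOn (fun u => (A + Q * u) / u ^ ((1:ℝ)+α))
        (fun u => A * u ^ (-(1+α)) + Q * u ^ (-α)) (uIcc c d) := by
      rw [uIcc_of_le hcd.le]; exact F_eqOn hα0 hα1 hc hA
    rw [intervalIntegral.integral_congr hFeq', G_integral hα0 hα1 hc hcd hA]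



noncomputable def pfun (α : ℝ) (k : ℕ) : ℝ := ((k:ℝ))^(-α)

noncomputable def summand (α : ℝ) (b z : ℕ → ℝ) (n j : ℕ) : ℝ :=
  (z n - ((n:ℝ) - (j:ℝ)) * z (j+1) + ((n:ℝ) - (j:ℝ) - 1) * z j)
      * (pfun α (n-1-j) - pfun α (n-j))
    + α/(1-α) * (z (j+1) - z j) * b (n-1-j)

noncomputable def rsummand (b z : ℕ → ℝ) (n i : ℕ) : ℝ :=
  (b (n-1-i) - b (n-i)) * z i

lemma comb {α : ℝ} (hα0 : 0 < α) (hα1 : α < 1) (b : ℕ → ℝ)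
    (hb : ∀ i : ℕ, b i = ((i:ℝ)+1)^(1-α) - (i:ℝ)^(1-α)) :
    ∀ (m : ℕ) (z : ℕ → ℝ),
      (z (m+1) - z 0) * pfun α (m+1)
        + ∑ j ∈ Finset.range (m+1), summand α b z (m+1) j
      = 1/(1-α) * (z (m+1) - b m * z 0
          - ∑ i ∈ Finset.range m, rsummand b z (m+1) (i+1)) := by
  have h1α : (1:ℝ) - α ≠ 0 := by linarith
  have hb0 : b 0 = 1 := by
    rw [hb 0, show ((0:ℕ):ℝ) = 0 by norm_num, Real.zero_rpow h1α]
    norm_num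
  have hkey : ∀ k : ℕ, ((k:ℝ)+1) * pfun α (k+1) = ((k:ℝ)+1)^(1-α) := by
    intro k
    have hpos : (0:ℝ) < (k:ℝ)+1 := by positivity
    rw [pfun, show ((1:ℝ)-α) = 1 + (-α) by ring, Real.rpow_add hpos, Real.rpow_one]
    push_cast
    ring
  intro m
  induction m with
  | zero =>
    intro z
    simp only [Finset.range_one, Finset.sum_singleton, Finset.range_zero, Finset.sum_empty,
      summand, pfun, hb0]
    norm_num
    rw [hb0]
    field_simp
    ring
  | succ m ih =>
    intro z
    have key := ih (fun k => z (k+1))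
    simp only [zero_add] at key
    have hstep : ∀ j ∈ Finset.range (m+1),
        summand α b z (m+1+1) (j+1) = summand α b (fun k => z (k+1)) (m+1) j := by
      intro j hj
      simp only [summand]
      rw [show m+1+1-1-(j+1) = m+1-1-j by omega, show m+1+1-(j+1) = m+1-j by omega]
      push_cast
      ring_nf
    have hstep2 : ∀ i ∈ Finset.range m,
        rsummand b z (m+1+1) (i+1+1) = rsummand b (fun k => z (k+1)) (m+1) (i+1) := by
      intro i hi
      simp only [rsummand]
      rw [show m+1+1-1-(i+1+1) = m+1-1-(i+1) by omega,
          show m+1+1-(i+1+1) = m+1-(i+1) by omega]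
    have e0 : summand α b z (m+1+1) 0
        = (z (m+1+1) - ((m:ℝ)+2) * z 1 + ((m:ℝ)+1) * z 0)
              * (pfun α (m+1) - pfun α (m+1+1))
          + α/(1-α) * (z 1 - z 0) * b (m+1) := by
      simp only [summand, Nat.sub_zero, Nat.add_sub_cancel, Nat.cast_zero, zero_add]
      push_cast
      ring_nf
    have e1 : rsummand b z (m+1+1) (0+1) = (b m - b (m+1)) * z 1 := by
      simp only [rsummand, zero_add]
      norm_num
    have hbm1 : b (m+1) = ((m:ℝ)+2) * pfun α (m+1+1) - ((m:ℝ)+1) * pfun α (m+1) := by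
      rw [hb (m+1)]
      have k1 := hkey m
      have k2 := hkey (m+1)
      push_cast at k1 k2 ⊢
      linarith [k1, k2]
    conv_lhs => rw [Finset.sum_range_succ']
    conv_rhs => rw [Finset.sum_range_succ']
    rw [Finset.sum_congr rfl hstep, Finset.sum_congr rfl hstep2, e0, e1, hbm1]
    field_simp at key ⊢
    linear_combination key

/-- the Caputo derivative of the piecewise linear interpolant at a
grid point equals the L1 formula. -/
theorem caputo_interp_eq_L1
    (T α τ : ℝ) (y : ℝ → ℝ) (n : ℕ) (b : ℕ → ℝ)
    (hα : α ∈ Ioo (0:ℝ) 1) (hτ : 0 < τ) (hn : 1 ≤ n) (hT : (n : ℝ) * τ ≤ T)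
    (hy : ContinuousOn y (Icc 0 T))
    (hb : ∀ i : ℕ, b i = ((i : ℝ) + 1) ^ (1 - α) - (i : ℝ) ^ (1 - α)) :
    caputo α (linInterp τ y) ((n : ℝ) * τ)
      = τ ^ (-α) / Real.Gamma (2 - α)
        * (y ((n : ℝ) * τ) - b (n - 1) * y 0
            - ∑ i ∈ Finset.Icc 1 (n - 1), (b (n - i - 1) - b (n - i)) * y ((i : ℝ) * τ)) := by
  obtain ⟨hα0, hα1⟩ := hα
  obtain ⟨m, rfl⟩ : ∃ m, n = m + 1 := ⟨n - 1, (Nat.succ_pred_eq_of_pos hn).symm⟩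
  have h1α : (1:ℝ) - α ≠ 0 := by linarith
  have hΓ : 0 < Real.Gamma (1 - α) := Real.Gamma_pos_of_pos (by linarith)
  set z : ℕ → ℝ := fun i => y ((i:ℝ)*τ) with hz
  have hY : linInterp τ y (((m+1:ℕ):ℝ)*τ) = y (((m+1:ℕ):ℝ)*τ) := linInterp_grid hτ y (m+1)
  have hY0 : linInterp τ y 0 = y 0 := by simpa using linInterp_grid hτ y 0
  -- integrability on each subinterval, with nat-cast endpoints
  have hint : ∀ k < m+1, IntervalIntegrable
      (fun s => (y (((m+1:ℕ):ℝ)*τ) - linInterp τ y s) / ((((m+1:ℕ):ℝ))*τ - s) ^ ((1:ℝ)+α))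
      volume (((k:ℕ):ℝ)*τ) ((((k+1:ℕ)):ℝ)*τ) := by
    intro k hk
    have h := (piece hα0 hα1 hτ y hk).1
    push_cast at h ⊢
    exact h
  have hsum := intervalIntegral.sum_integral_adjacent_intervals
    (a := fun k : ℕ => (k:ℝ)*τ) (μ := volume) (n := m+1)
    (f := fun s => (y (((m+1:ℕ):ℝ)*τ) - linInterp τ y s) / ((((m+1:ℕ):ℝ))*τ - s) ^ ((1:ℝ)+α))
    hint
  simp only [Nat.cast_zero, zero_mul] at hsum
  -- per-term value
  have hterm : ∀ k ∈ Finset.range (m+1),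
      (∫ s in (((k:ℕ):ℝ)*τ)..((((k+1:ℕ)):ℝ)*τ),
          (y (((m+1:ℕ):ℝ)*τ) - linInterp τ y s) / ((((m+1:ℕ):ℝ))*τ - s) ^ ((1:ℝ)+α))
        = τ^(-α)/α * summand α b z (m+1) k := by
    intro k hk
    have hk' : k < m+1 := Finset.mem_range.mp hk
    obtain ⟨l, hl⟩ : ∃ l, m = k + l := ⟨m - k, by omega⟩
    have hp := (piece hα0 hα1 hτ y hk').2
    have hc1 : ((m+1:ℕ):ℝ) - (k:ℝ) - 1 = ((l:ℕ):ℝ) := by rw [hl]; push_cast; ring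
    have hc2 : ((m+1:ℕ):ℝ) - (k:ℝ) = ((l:ℕ):ℝ) + 1 := by rw [hl]; push_cast; ring
    rw [show (((k+1:ℕ)):ℝ) = (k:ℝ)+1 by push_cast; ring, hp, hc1, hc2]
    simp only [summand, hz, show m+1-1-k = l by omega, show m+1-k = l+1 by omega, pfun]
    rw [hb l]
    have hr1 : (((l:ℕ):ℝ)*τ)^(-α) = ((l:ℕ):ℝ)^(-α) * τ^(-α) :=
      Real.mul_rpow (Nat.cast_nonneg l) hτ.le
    have hr2 : ((((l:ℕ):ℝ)+1)*τ)^(-α) = (((l:ℕ):ℝ)+1)^(-α) * τ^(-α) :=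
      Real.mul_rpow (by positivity) hτ.le
    have hr3 : ((((l:ℕ):ℝ)+1)*τ)^(1-α) = (((l:ℕ):ℝ)+1)^(1-α) * τ^(1-α) :=
      Real.mul_rpow (by positivity) hτ.le
    have hr4 : (((l:ℕ):ℝ)*τ)^(1-α) = ((l:ℕ):ℝ)^(1-α) * τ^(1-α) :=
      Real.mul_rpow (Nat.cast_nonneg l) hτ.le
    have hr5 : τ^((1:ℝ)-α) = τ * τ^(-α) := by
      rw [show (1:ℝ)-α = 1 + (-α) by ring, Real.rpow_add hτ, Real.rpow_one]
    rw [hr1, hr2, hr3, hr4, hr5]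
    push_cast [hl]
    field_simp
    ring
  have hcomb := comb hα0 hα1 b hb m z
  have hIcc : ∑ i ∈ Finset.Icc 1 m, (b (m+1-i-1) - b (m+1-i)) * y ((i:ℝ)*τ)
      = ∑ i ∈ Finset.range m, rsummand b z (m+1) (i+1) := by
    rw [← Finset.Ico_add_one_right_eq_Icc, Finset.sum_Ico_eq_sum_range]
    apply Finset.sum_congr rfl
    intro i hi
    simp only [rsummand, hz]
    rw [show m+1-(1+i)-1 = m+1-1-(i+1) by omega, show m+1-(1+i) = m+1-(i+1) by omega,
        show 1+i = i+1 by omega]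
  simp only [caputo, hY, hY0, Nat.add_sub_cancel]
  rw [← hsum, Finset.sum_congr rfl hterm, ← Finset.mul_sum]
  rw [show (2:ℝ)-α = (1-α)+1 by ring, Real.Gamma_add_one h1α]
  rw [hIcc]
  -- first term rewrite
  have h_t : (1 / Real.Gamma (1-α)) * (y (((m+1:ℕ):ℝ)*τ) - y 0) / ((((m+1:ℕ):ℝ))*τ)^α
      = τ^(-α)/Real.Gamma (1-α) * ((z (m+1) - z 0) * pfun α (m+1)) := by
    have h1 : (0:ℝ) < ((m+1:ℕ):ℝ)*τ := by positivity
    rw [div_eq_mul_inv, ← Real.rpow_neg h1.le,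
        Real.mul_rpow (by positivity) hτ.le, pfun, hz]
    simp only []
    rw [show (((0:ℕ)):ℝ)*τ = 0 by norm_num]
    ring
  rw [h_t]
  -- now pure algebra using hcomb
  simp only [hz] at hcomb ⊢
  rw [show (((0:ℕ)):ℝ)*τ = 0 by norm_num] at hcomb
  have hS : ∑ x ∈ Finset.range (m+1), summand α b (fun i => y ((i:ℝ)*τ)) (m+1) x
      = 1/(1-α) * (y (((m+1:ℕ):ℝ)*τ) - b m * y 0
          - ∑ x ∈ Finset.range m, rsummand b (fun i => y ((i:ℝ)*τ)) (m+1) (x+1))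
        - (y (((m+1:ℕ):ℝ)*τ) - y 0) * pfun α (m+1) := by linarith [hcomb]
  rw [hS]
  have hαne : α ≠ 0 := ne_of_gt hα0
  have hΓne : Real.Gamma (1-α) ≠ 0 := hΓ.ne'
  field_simp
  ring
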